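/- Canonical model for EL⊥ classifications: let O' be an EL⊥ ontology and N = {(C, D) : C, D ∈ sub(O') and O' ⊨ C ⊑ D}. Define the interpretation I' with domain Δ = {C ∈ sub(O') : (C, ⊥) ∉ N}, assumed nonempty, A^{I'} = {C ∈ Δ : (C, A) ∈ N} for every concept name A, and r^{I'} = {(C, D) ∈ Δ × Δ : (C, ∃r.D) ∈ N} for every role name r. Then (i) for every C ∈ Δ and every D ∈ sub(O'), C ∈ D^{I'} if and only if (C, D) ∈ N; and (ii) I' is a model of O'. -/

import Mathlib

/-- EL⊥ concepts over concept names `C` and role names `R`. -/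
inductive ELConcept (C R : Type) : Type where
  | top : ELConcept C R
  | bot : ELConcept C R
  | atom (A : C) : ELConcept C R
  | inter (c d : ELConcept C R) : ELConcept C R
  | ex (r : R) (c : ELConcept C R) : ELConcept C R

/-- An interpretation: a nonempty domain, a set for each concept name, and a binary
relation for each role name. -/
structure ELInterp (C R : Type) : Type 1 where
  Dom : Type
  dom_nonempty : Nonempty Dom
  conSem : C → Set Dom
  roleSem : R → Set (Dom × Dom)

/-- Semantics of EL⊥ concepts. -/
def ELConcept.sem {C R : Type} (I : ELInterp C R) : ELConcept C R → Set I.Dom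
  | .top => Set.univ
  | .bot => ∅
  | .atom A => I.conSem A
  | .inter c d => c.sem I ∩ d.sem I
  | .ex r c => {x | ∃ y, (x, y) ∈ I.roleSem r ∧ y ∈ c.sem I}

/-- The subconcepts of a concept (including the concept itself). -/
def ELConcept.subc {C R : Type} : ELConcept C R → Set (ELConcept C R)
  | .top => {.top}
  | .bot => {.bot}
  | .atom A => {.atom A}
  | .inter c d => insert (.inter c d) (c.subc ∪ d.subc)
  | .ex r c => insert (.ex r c) c.subc

/-- An ontology is a set of axioms `C ⊑ D`, represented as pairs `(C, D)`. -/
abbrev ELOntology (C R : Type) := Set (ELConcept C R × ELConcept C R)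

/-- `I` is a model of the ontology `O`. -/
def IsModel {C R : Type} (I : ELInterp C R) (O : ELOntology C R) : Prop :=
  ∀ ax ∈ O, ax.1.sem I ⊆ ax.2.sem I

/-- `O ⊨ C ⊑ D`: every model of `O` satisfies `C ⊑ D`. -/
def Entails {C R : Type} (O : ELOntology C R) (c d : ELConcept C R) : Prop :=
  ∀ I : ELInterp C R, IsModel I O → c.sem I ⊆ d.sem I

/-- `sub(O)`: the subconcepts of concepts occurring in `O`. -/
def subO {C R : Type} (O : ELOntology C R) : Set (ELConcept C R) :=
  ⋃ ax ∈ O, ax.1.subc ∪ ax.2.subc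

/-- The classification `N = {(C, D) : C, D ∈ sub(O), O ⊨ C ⊑ D}`. -/
def CL {C R : Type} (O : ELOntology C R) : Set (ELConcept C R × ELConcept C R) :=
  {p | p.1 ∈ subO O ∧ p.2 ∈ subO O ∧ Entails O p.1 p.2}

/-- The domain of the canonical interpretation: `Δ = {C ∈ sub(O) : (C, ⊥) ∉ N}`. -/
def CanonDom {C R : Type} (O : ELOntology C R) : Type :=
  {E : ELConcept C R // E ∈ subO O ∧ (E, ELConcept.bot) ∉ CL O}

/-- The canonical interpretation `I'` built from the classification of `O`. -/
def canonInterp {C R : Type} (O : ELOntology C R) (hne : Nonempty (CanonDom O)) :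
    ELInterp C R where
  Dom := CanonDom O
  dom_nonempty := hne
  conSem A := {e : CanonDom O | (e.val, ELConcept.atom A) ∈ CL O}
  roleSem r := {p : CanonDom O × CanonDom O | (p.1.val, ELConcept.ex r p.2.val) ∈ CL O}

namespace CanonAux

variable {C R : Type}

lemma self_mem_subc (D : ELConcept C R) : D ∈ D.subc := by
  cases D <;> simp [ELConcept.subc]

lemma subc_trans {D E : ELConcept C R} (h : E ∈ D.subc) : E.subc ⊆ D.subc := by
  induction D with
  | top => simp [ELConcept.subc] at h; subst h; exact subset_rfl
  | bot => simp [ELConcept.subc] at h; subst h; exact subset_rfl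
  | atom A => simp [ELConcept.subc] at h; subst h; exact subset_rfl
  | inter c d ihc ihd =>
    simp only [ELConcept.subc, Set.mem_insert_iff, Set.mem_union] at h
    rcases h with h | h | h
    · subst h; exact subset_rfl
    · exact (ihc h).trans (fun x hx => by
        simp only [ELConcept.subc, Set.mem_insert_iff, Set.mem_union]; tauto)
    · exact (ihd h).trans (fun x hx => by
        simp only [ELConcept.subc, Set.mem_insert_iff, Set.mem_union]; tauto)
  | ex r c ihc =>
    simp only [ELConcept.subc, Set.mem_insert_iff] at h
    rcases h with h | h
    · subst h; exact subset_rfl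
    · exact (ihc h).trans (fun x hx => by
        simp only [ELConcept.subc, Set.mem_insert_iff]; tauto)

lemma subO_closed {O : ELOntology C R} {D E : ELConcept C R}
    (hD : D ∈ subO O) (hE : E ∈ D.subc) : E ∈ subO O := by
  simp only [subO, Set.mem_iUnion] at hD ⊢
  obtain ⟨ax, hax, hm⟩ := hD
  refine ⟨ax, hax, ?_⟩
  rcases hm with hm | hm
  · exact Or.inl (subc_trans hm hE)
  · exact Or.inr (subc_trans hm hE)

lemma entails_refl (O : ELOntology C R) (c : ELConcept C R) : Entails O c c :=
  fun _ _ => subset_rfl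

lemma entails_trans {O : ELOntology C R} {c d e : ELConcept C R}
    (h1 : Entails O c d) (h2 : Entails O d e) : Entails O c e :=
  fun I hI => (h1 I hI).trans (h2 I hI)

lemma entails_ax {O : ELOntology C R} {c d : ELConcept C R} (h : (c, d) ∈ O) :
    Entails O c d := fun _ hI => hI _ h

/-- Key lemma: part (i) of the canonical model theorem. -/
lemma key {O : ELOntology C R} (hne : Nonempty (CanonDom O))
    (D : ELConcept C R) (hD : D ∈ subO O) (e : CanonDom O) :
    e ∈ ELConcept.sem (canonInterp O hne) D ↔ (e.val, D) ∈ CL O := by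
  induction D generalizing e with
  | top =>
    simp only [ELConcept.sem, Set.mem_univ, true_iff]
    exact ⟨fun _ => ⟨e.2.1, hD, fun I hI x _ => trivial⟩, fun _ => trivial⟩
  | bot =>
    simp only [ELConcept.sem, Set.mem_empty_iff_false, false_iff]
    exact ⟨fun h => False.elim h, fun h => absurd h e.2.2⟩
  | atom A => exact Iff.rfl
  | inter c d ihc ihd =>
    have hc : c ∈ subO O := subO_closed hD (by
      simp [ELConcept.subc, self_mem_subc])
    have hd : d ∈ subO O := subO_closed hD (by
      simp [ELConcept.subc, self_mem_subc])
    constructor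
    · rintro ⟨h1, h2⟩
      have h1' := (ihc hc e).1 h1
      have h2' := (ihd hd e).1 h2
      exact ⟨e.2.1, hD, fun I hI x hx => ⟨h1'.2.2 I hI hx, h2'.2.2 I hI hx⟩⟩
    · rintro ⟨_, _, hent⟩
      constructor
      · exact (ihc hc e).2 ⟨e.2.1, hc, fun I hI x hx => (hent I hI hx).1⟩
      · exact (ihd hd e).2 ⟨e.2.1, hd, fun I hI x hx => (hent I hI hx).2⟩
  | ex r c ihc =>
    have hc : c ∈ subO O := subO_closed hD (by
      simp [ELConcept.subc, self_mem_subc])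
    constructor
    · rintro ⟨f, hrf, hf⟩
      have hf' := (ihc hc f).1 hf
      refine ⟨e.2.1, hD, fun I hI x hx => ?_⟩
      obtain ⟨y, hy1, hy2⟩ := hrf.2.2 I hI hx
      exact ⟨y, hy1, hf'.2.2 I hI hy2⟩
    · rintro ⟨he, _, hent⟩
      -- witness: c itself
      have hcbot : (c, ELConcept.bot) ∉ CL O := by
        rintro ⟨_, hbotsub, hcb⟩
        apply e.2.2
        refine ⟨e.2.1, hbotsub, fun I hI x hx => ?_⟩
        obtain ⟨y, _, hy⟩ := hent I hI hx
        exact absurd (hcb I hI hy) (by simp [ELConcept.sem])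
      refine ⟨⟨c, hc, hcbot⟩, ⟨e.2.1, hD, hent⟩, ?_⟩
      exact (ihc hc ⟨c, hc, hcbot⟩).2 ⟨hc, hc, entails_refl O c⟩

end CanonAux

/-- **Canonical model for EL⊥ classifications.**
(i) for every `C ∈ Δ` and `D ∈ sub(O)`, `C ∈ D^{I'}` iff `(C, D) ∈ N`; and
(ii) `I'` is a model of `O`. -/

theorem canonical_model {C R : Type} (O : ELOntology C R) (hfin : O.Finite)
    (hne : Nonempty (CanonDom O)) :
    (∀ (e : CanonDom O) (D : ELConcept C R), D ∈ subO O →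
      (e ∈ ELConcept.sem (canonInterp O hne) D ↔ (e.val, D) ∈ CL O)) ∧
    IsModel (canonInterp O hne) O := by
  have key := @CanonAux.key C R O hne
  constructor
  · exact fun e D hD => key D hD e
  · rintro ⟨c, d⟩ hax e he
    have hc : c ∈ subO O := by
      simp only [subO, Set.mem_iUnion]
      exact ⟨(c, d), hax, Or.inl (CanonAux.self_mem_subc c)⟩
    have hd : d ∈ subO O := by
      simp only [subO, Set.mem_iUnion]
      exact ⟨(c, d), hax, Or.inr (CanonAux.self_mem_subc d)⟩
    have h1 := (key c hc e).1 he
    exact (key d hd e).2 ⟨e.2.1, hd,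
      CanonAux.entails_trans h1.2.2 (CanonAux.entails_ax hax)⟩
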